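/- The operator R_n satisfies the braid relation: (R_n ⊗ Id)(Id ⊗ R_n)(R_n ⊗ Id) = (Id ⊗ R_n)(R_n ⊗ Id)(Id ⊗ R_n) as endomorphisms of V_n ⊗ V_n ⊗ V_n. -/

import Mathlib

set_option maxHeartbeats 1600000
set_option synthInstance.maxHeartbeats 400000

open TensorProduct

/-- The Yang–Baxter operator `R_n` satisfies the braid relation
`(R ⊗ Id)(Id ⊗ R)(R ⊗ Id) = (Id ⊗ R)(R ⊗ Id)(Id ⊗ R)` on `V_n ⊗ V_n ⊗ V_n`. -/
theorem stmt1 (K : Type*) [Field K] (q : K) (hq : q ≠ 0) (n : ℕ)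
    (R : ((Fin n → K) ⊗[K] (Fin n → K)) →ₗ[K] ((Fin n → K) ⊗[K] (Fin n → K)))
    (hR : ∀ i j : Fin n,
      R (Pi.basisFun K (Fin n) i ⊗ₜ[K] Pi.basisFun K (Fin n) j) =
        if i < j then Pi.basisFun K (Fin n) j ⊗ₜ[K] Pi.basisFun K (Fin n) i
        else if i = j then q • (Pi.basisFun K (Fin n) j ⊗ₜ[K] Pi.basisFun K (Fin n) i)
        else (q - q⁻¹) • (Pi.basisFun K (Fin n) i ⊗ₜ[K] Pi.basisFun K (Fin n) j)
              + Pi.basisFun K (Fin n) j ⊗ₜ[K] Pi.basisFun K (Fin n) i) :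
    (LinearMap.rTensor (Fin n → K) R) ∘ₗ
        ((TensorProduct.assoc K (Fin n → K) (Fin n → K) (Fin n → K)).symm.toLinearMap ∘ₗ
          (LinearMap.lTensor (Fin n → K) R) ∘ₗ
          (TensorProduct.assoc K (Fin n → K) (Fin n → K) (Fin n → K)).toLinearMap) ∘ₗ
        (LinearMap.rTensor (Fin n → K) R) =
      ((TensorProduct.assoc K (Fin n → K) (Fin n → K) (Fin n → K)).symm.toLinearMap ∘ₗ
          (LinearMap.lTensor (Fin n → K) R) ∘ₗ
          (TensorProduct.assoc K (Fin n → K) (Fin n → K) (Fin n → K)).toLinearMap) ∘ₗ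
        (LinearMap.rTensor (Fin n → K) R) ∘ₗ
        ((TensorProduct.assoc K (Fin n → K) (Fin n → K) (Fin n → K)).symm.toLinearMap ∘ₗ
          (LinearMap.lTensor (Fin n → K) R) ∘ₗ
          (TensorProduct.assoc K (Fin n → K) (Fin n → K) (Fin n → K)).toLinearMap) := by
  have e := Pi.basisFun K (Fin n)
  clear e
  have hlt : ∀ a b : Fin n, a < b →
      R (Pi.basisFun K (Fin n) a ⊗ₜ[K] Pi.basisFun K (Fin n) b) =
        Pi.basisFun K (Fin n) b ⊗ₜ[K] Pi.basisFun K (Fin n) a :=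
    fun a b h => by rw [hR, if_pos h]
  have heq : ∀ a b : Fin n, a = b →
      R (Pi.basisFun K (Fin n) a ⊗ₜ[K] Pi.basisFun K (Fin n) b) =
        q • (Pi.basisFun K (Fin n) b ⊗ₜ[K] Pi.basisFun K (Fin n) a) :=
    fun a b h => by rw [hR, if_neg (by simp [h]), if_pos h]
  have hgt : ∀ a b : Fin n, b < a →
      R (Pi.basisFun K (Fin n) a ⊗ₜ[K] Pi.basisFun K (Fin n) b) =
        (q - q⁻¹) • (Pi.basisFun K (Fin n) a ⊗ₜ[K] Pi.basisFun K (Fin n) b)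
          + Pi.basisFun K (Fin n) b ⊗ₜ[K] Pi.basisFun K (Fin n) a :=
    fun a b h => by rw [hR, if_neg h.asymm, if_neg (ne_of_gt h)]
  clear hR
  apply TensorProduct.ext
  apply TensorProduct.ext
  apply (Pi.basisFun K (Fin n)).ext
  intro i
  apply (Pi.basisFun K (Fin n)).ext
  intro j
  apply (Pi.basisFun K (Fin n)).ext
  intro k
  rcases lt_trichotomy i j with h1 | h1 | h1 <;>
    rcases lt_trichotomy j k with h2 | h2 | h2 <;>
    rcases lt_trichotomy i k with h3 | h3 | h3 <;>
    try omega
  all_goals (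
    simp only [LinearMap.compr₂_apply, LinearMap.compr₂ₛₗ_apply, TensorProduct.mk_apply, LinearMap.comp_apply,
      LinearEquiv.coe_coe, LinearMap.rTensor_tmul, LinearMap.lTensor_tmul,
      TensorProduct.assoc_tmul, TensorProduct.assoc_symm_tmul, map_add, map_smul,
      tmul_add, add_tmul, ← smul_tmul', tmul_smul, smul_smul, smul_add]
    simp only [hlt, heq, hgt, h1, h2, h3, LinearMap.rTensor_tmul, LinearMap.lTensor_tmul,
      TensorProduct.assoc_tmul, TensorProduct.assoc_symm_tmul, map_add, map_smul,
      tmul_add, add_tmul, ← smul_tmul', tmul_smul, smul_smul, smul_add]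
    try (match_scalars <;> field_simp <;> try ring))
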